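/- Let x be an adequate homogeneous state and X an enhancement in which each B-zone contains at most one 1-labeled circle. Then for every enhanced state Y of the diagram D, the coefficient sum ε(π_{[X]_B}(dY)) lies in 2R, where π_{[X]_B} is projection onto the span of the B-equivalence class of X and ε is the augmentation sending every enhanced state to 1. -/
import Mathlib


attribute [local instance] Classical.propDecidable

/-- The local datum of the Khovanov differential at a crossing: changing an A-smoothing
to a B-smoothing either merges two circles `i ≠ j` of the source state (via the
relabeling `f`) or splits one circle into two circles `i ≠ j` of the target state
(via the relabeling `g`). -/
inductive KTrans (m n : ℕ) : Type
  | merge (f : Fin m → Fin n) (i j : Fin m) (hij : i ≠ j) (hf : f i = f j)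
  | split (g : Fin n → Fin m) (i j : Fin n) (hij : i ≠ j) (hg : g i = g j)

/-- The merge/split maps of the Frobenius algebra `R[q]/(q²)` acting on enhancements
(`true` = label 1 = `q`, `false` = label 0 = `1`):
merge: `q⊗q ↦ 0`, `1⊗q, q⊗1 ↦ q`, `1⊗1 ↦ 1`; split: `q ↦ q⊗q`, `1 ↦ q⊗1 + 1⊗q`. -/
noncomputable def ktransApply {R : Type*} [CommRing R] {m n : ℕ} :
    KTrans m n → (Fin m → Bool) → ((Fin n → Bool) →₀ R)
  | .merge f i j _ _, a =>
      if a i = true ∧ a j = true then 0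
      else Finsupp.single (fun l => decide (∃ k, f k = l ∧ a k = true)) 1
  | .split g i j _ _, a =>
      if a (g i) = true then Finsupp.single (a ∘ g) 1
      else Finsupp.single (Function.update (a ∘ g) i true) 1
        + Finsupp.single (Function.update (a ∘ g) j true) 1

/-- A combinatorial model of a link diagram for Viro-style Khovanov homology:
`c` crossings, states `s : Fin c → Bool` (`true` = A-smoothing), each state having
`circ s` circles, and for every A-smoothed crossing of every state the merge/split
transition datum to the state with that smoothing changed to B. -/
structure Diagram where
  c : ℕ
  circ : (Fin c → Bool) → ℕ
  trans : ∀ (s : Fin c → Bool) (t : Fin c), s t = true →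
    KTrans (circ s) (circ (Function.update s t false))

namespace Diagram

/-- Enhanced states: a state together with a `{0,1}`-labeling of its circles. -/
abbrev Enh (D : Diagram) : Type := Σ s : Fin D.c → Bool, Fin (D.circ s) → Bool

variable {R : Type*} [CommRing R]

/-- The Khovanov differential of an enhanced state:
`d X = ∑_t (-1)^{|A|_X^t} d_{c^t} X`, where `|A|_X^t` counts A-smoothings at crossings
of smaller index and `d_{c^t}` is the merge/split map (zero at B-smoothings). -/
noncomputable def dE (D : Diagram) (X : D.Enh) : D.Enh →₀ R :=
  ∑ t : Fin D.c,
    if h : X.1 t = true then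
      ((-1 : R) ^ (Finset.univ.filter fun r => r < t ∧ X.1 r = true).card) •
        Finsupp.mapDomain (fun b => (⟨Function.update X.1 t false, b⟩ : D.Enh))
          (ktransApply (D.trans X.1 t h) X.2)
    else 0

/-- The Khovanov differential on the chain module `C_R(D)`, the free `R`-module on
enhanced states. -/
noncomputable def d (D : Diagram) (Z : D.Enh →₀ R) : D.Enh →₀ R :=
  Z.sum fun e r => r • D.dE e

end Diagram

/-- Swap the labels on the two endpoint circles of a crossing arc. -/
def swapAt {n : ℕ} (e : Fin n × Fin n) (a : Fin n → Bool) : Fin n → Bool :=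
  Function.update (Function.update a e.1 (a e.2)) e.2 (a e.1)

/-- The equivalence relation `∼_A` (for `v = true`) resp. `∼_B` (for `v = false`) on
enhancements of a state, generated by swapping the labels on the two endpoint circles of
an arc of the corresponding type (`sm t = true` means an A-arc at crossing `t`, and
`ep t` gives the two circles the arc joins). -/
def RelLab {c n : ℕ} (sm : Fin c → Bool) (ep : Fin c → Fin n × Fin n) (v : Bool) :
    (Fin n → Bool) → (Fin n → Bool) → Prop :=
  Relation.ReflTransGen fun a b => ∃ t, sm t = v ∧ b = swapAt (ep t) a

/-- Connectivity of circles through arcs of a fixed type: `Conn sm ep true i j` says the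
circles `i`, `j` lie in the same A-zone (`v = false`: same B-zone). -/
def Conn {c n : ℕ} (sm : Fin c → Bool) (ep : Fin c → Fin n × Fin n) (v : Bool) :
    Fin n → Fin n → Prop :=
  Relation.ReflTransGen fun i j => ∃ t, sm t = v ∧ (ep t = (i, j) ∨ ep t = (j, i))

/-- Homogeneity of a state: no simple cycle of the state graph contains arcs of both
types (equivalently, every block of the state graph is all-A or all-B). -/
def Homog {c n : ℕ} (sm : Fin c → Bool) (ep : Fin c → Fin n × Fin n) : Prop :=
  ∀ (k : ℕ), 2 ≤ k → ∀ (te : ZMod k → Fin c) (ve : ZMod k → Fin n),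
    Function.Injective te → Function.Injective ve →
    (∀ i, ep (te i) = (ve i, ve (i + 1)) ∨ ep (te i) = (ve (i + 1), ve i)) →
    ∀ i j, sm (te i) = sm (te j)

section Aux

lemma swapAt_apply {n : ℕ} (e : Fin n × Fin n) (a : Fin n → Bool) (k : Fin n) :
    swapAt e a k = if k = e.2 then a e.1 else if k = e.1 then a e.2 else a k := by
  simp [swapAt, Function.update_apply]

lemma swapAt_swapAt {n : ℕ} (e : Fin n × Fin n) (a : Fin n → Bool) :
    swapAt e (swapAt e a) = a := by
  funext k
  simp only [swapAt_apply]
  by_cases h1 : k = e.2 <;> by_cases h2 : k = e.1 <;>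
    by_cases h3 : (e.1 : Fin n) = e.2 <;> simp_all

lemma rtg_symm {α : Type*} {r : α → α → Prop} (hr : ∀ a b, r a b → r b a)
    {a b : α} (h : Relation.ReflTransGen r a b) : Relation.ReflTransGen r b a := by
  induction h with
  | refl => exact .refl
  | tail _ h2 ih => exact (Relation.ReflTransGen.single (hr _ _ h2)).trans ih

lemma conn_symm {c n : ℕ} {sm : Fin c → Bool} {ep : Fin c → Fin n × Fin n} {v : Bool}
    {i j : Fin n} (h : Conn sm ep v i j) : Conn sm ep v j i :=
  rtg_symm (fun _ _ ⟨t, h1, h2⟩ => ⟨t, h1, h2.symm⟩) h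

lemma swapAt_eq_comp {n : ℕ} (e : Fin n × Fin n) (hne : e.1 ≠ e.2) (a : Fin n → Bool) :
    swapAt e a = a ∘ (Equiv.swap e.1 e.2) := by
  funext k
  rw [swapAt_apply, Function.comp_apply, Equiv.swap_apply_def]
  by_cases h1 : k = e.2 <;> by_cases h2 : k = e.1 <;> simp_all

lemma zone_invariant {c n : ℕ} (sm : Fin c → Bool) (ep : Fin c → Fin n × Fin n)
    (hadq : ∀ t, (ep t).1 ≠ (ep t).2) {X b : Fin n → Bool}
    (h : RelLab sm ep false X b)
    (hX : ∀ i j, Conn sm ep false i j → X i = true → X j = true → i = j) :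
    ∀ i j, Conn sm ep false i j → b i = true → b j = true → i = j := by
  induction h with
  | refl => exact hX
  | tail _ h2 ih =>
    obtain ⟨t, hst, rfl⟩ := h2
    intro i j hconn hi hj
    set σ := Equiv.swap (ep t).1 (ep t).2 with hσ
    have hcomp := swapAt_eq_comp (ep t) (hadq t)
    have hσconn : ∀ k, Conn sm ep false k (σ k) := by
      intro k
      rw [hσ, Equiv.swap_apply_def]
      by_cases h1 : k = (ep t).1
      · subst h1
        simp only [if_pos rfl]
        exact Relation.ReflTransGen.single ⟨t, hst, Or.inl rfl⟩
      · by_cases h2 : k = (ep t).2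
        · subst h2
          simp only [if_neg h1, if_pos rfl]
          exact Relation.ReflTransGen.single ⟨t, hst, Or.inr rfl⟩
        · simp only [if_neg h1, if_neg h2]
          exact Relation.ReflTransGen.refl
    rw [hcomp] at hi hj
    have : σ i = σ j := by
      refine ih (σ i) (σ j) ?_ hi hj
      exact ((conn_symm (hσconn i)).trans hconn).trans (hσconn j)
    exact σ.injective this

lemma mapDomain_cast_apply {R : Type*} [CommRing R] (D : Diagram)
    (s' s0 : Fin D.c → Bool) (e : s' = s0) (m : ℕ)
    (T : KTrans m (D.circ s'))
    (g : Fin (D.circ s0) → Fin m) (i j : Fin (D.circ s0)) (hij : i ≠ j)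
    (hg : g i = g j)
    (hT : cast (congrArg (fun s => KTrans m (D.circ s)) e) T = KTrans.split g i j hij hg)
    (a : Fin m → Bool) (b : Fin (D.circ s0) → Bool) :
    Finsupp.mapDomain (fun b' : Fin (D.circ s') → Bool => (⟨s', b'⟩ : D.Enh))
      (ktransApply (R := R) T a) ⟨s0, b⟩
      = ktransApply (R := R) (KTrans.split g i j hij hg) a b := by
  subst e
  have hT' : T = KTrans.split g i j hij hg := hT
  subst hT'
  have hinj : Function.Injective (fun b' : Fin (D.circ s') → Bool => (⟨s', b'⟩ : D.Enh)) :=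
    fun x y h => by simpa using h
  exact Finsupp.mapDomain_apply hinj (ktransApply (R := R) (KTrans.split g i j hij hg) a) b

end Aux

/-- For an adequate homogeneous state `x` (state `s0` of the diagram `D`, each B-arc
matching the split transition into `s0`) and an enhancement `X` with at most one
1-labeled circle in each B-zone, the composite `ε ∘ π_{[X]_B} ∘ d` lands in `2R`:
for every enhanced state `Y` of `D`, the sum of the coefficients of `dY` on the
B-equivalence class of `X` lies in `2R`. -/
theorem eps_proj_d_in_2R (R : Type*) [CommRing R] (D : Diagram) (s0 : Fin D.c → Bool)
    (ep : Fin D.c → Fin (D.circ s0) × Fin (D.circ s0))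
    (hadq : ∀ t, (ep t).1 ≠ (ep t).2)
    (hhom : Homog s0 ep)
    (hcompatB : ∀ (t : Fin D.c) (h : s0 t = false),
      ∃ g hne hg,
        cast (congrArg (fun s => KTrans (D.circ (Function.update s0 t true)) (D.circ s))
            (show Function.update (Function.update s0 t true) t false = s0 by
              rw [Function.update_idem]
              exact Function.update_eq_self_iff.mpr h.symm))
          (D.trans (Function.update s0 t true) t (by simp))
        = KTrans.split g (ep t).1 (ep t).2 hne hg)
    (X : Fin (D.circ s0) → Bool)
    (hzoneB : ∀ i j, Conn s0 ep false i j → X i = true → X j = true → i = j)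
    (Y : D.Enh) :
    ∃ r : R, (∑ b ∈ Finset.univ.filter (fun b => RelLab s0 ep false X b),
        (D.dE (R := R) Y) ⟨s0, b⟩) = 2 * r := by
  obtain ⟨y1, y2⟩ := Y
  have hper : ∀ t : Fin D.c, ∃ r : R,
      (∑ b ∈ Finset.univ.filter (fun b => RelLab s0 ep false X b),
        (if h : y1 t = true then
          ((-1 : R) ^ (Finset.univ.filter fun r => r < t ∧ y1 r = true).card) •
            Finsupp.mapDomain (fun b => (⟨Function.update y1 t false, b⟩ : D.Enh))
              (ktransApply (D.trans y1 t h) y2)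
        else 0) ⟨s0, b⟩) = 2 * r := by
    intro t
    by_cases h1 : y1 t = true
    · by_cases h2 : Function.update y1 t false = s0
      · -- interesting case
        have hst : s0 t = false := by rw [← h2]; simp
        have e : y1 = Function.update s0 t true := by
          have : Function.update s0 t true = y1 := by
            rw [← h2, Function.update_idem]
            exact Function.update_eq_self_iff.mpr h1.symm
          exact this.symm
        subst e
        obtain ⟨g, hne, hg, hT⟩ := hcompatB t hst
        simp only [dif_pos h1, Finsupp.smul_apply, smul_eq_mul]
        have key : ∀ b : Fin (D.circ s0) → Bool,
            Finsupp.mapDomain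
              (fun b => (⟨Function.update (Function.update s0 t true) t false, b⟩ : D.Enh))
              (ktransApply (R := R) (D.trans (Function.update s0 t true) t h1) y2) ⟨s0, b⟩
            = ktransApply (R := R) (KTrans.split g (ep t).1 (ep t).2 hne hg) y2 b := by
          intro b
          exact mapDomain_cast_apply D _ s0 h2 _ _ g _ _ hne hg hT y2 b
        simp only [key]
        have main : ∃ r0 : R,
            (∑ b ∈ Finset.univ.filter (fun b => RelLab s0 ep false X b),
              ktransApply (R := R) (KTrans.split g (ep t).1 (ep t).2 hne hg) y2 b)
            = 2 * r0 := by
          simp only [ktransApply]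
          by_cases hsp : y2 (g (ep t).1) = true
          · refine ⟨0, ?_⟩
            rw [mul_zero]
            apply Finset.sum_eq_zero
            intro b hb
            rw [if_pos hsp, Finsupp.single_apply, if_neg]
            rintro rfl
            have hz := zone_invariant s0 ep hadq (Finset.mem_filter.mp hb).2 hzoneB
            exact hadq t (hz _ _ (Relation.ReflTransGen.single ⟨t, hst, Or.inl rfl⟩)
              hsp (by show y2 (g (ep t).2) = true; rw [← hg]; exact hsp))
          · simp only [if_neg hsp, Finsupp.add_apply, Finsupp.single_apply]
            rw [Finset.sum_add_distrib, Finset.sum_ite_eq, Finset.sum_ite_eq]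
            have hAi : y2 (g (ep t).1) = false := by
              rwa [Bool.not_eq_true] at hsp
            have hAj : y2 (g (ep t).2) = false := by
              rw [← hg]; exact hAi
            have hne' := hadq t
            have hswap : Function.update (y2 ∘ g) (ep t).2 true
                = swapAt (ep t) (Function.update (y2 ∘ g) (ep t).1 true) := by
              funext k
              rw [swapAt_apply]
              by_cases hk2 : k = (ep t).2
              · subst hk2
                simp [Function.update_apply, hne'.symm]
              · by_cases hk1 : k = (ep t).1
                · subst hk1
                  simp [Function.update_apply, if_neg hk2, hne', hAi, hAj, hne'.symm]
                · simp [Function.update_apply, hk1, hk2]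
            have hmm : RelLab s0 ep false X (Function.update (y2 ∘ g) (ep t).1 true)
                ↔ RelLab s0 ep false X (Function.update (y2 ∘ g) (ep t).2 true) := by
              constructor
              · intro h; exact h.tail ⟨t, hst, hswap⟩
              · intro h; exact h.tail ⟨t, hst, by rw [hswap, swapAt_swapAt]⟩
            by_cases hb1 : Function.update (y2 ∘ g) (ep t).1 true
                ∈ Finset.univ.filter (fun b => RelLab s0 ep false X b)
            · have hb2 : Function.update (y2 ∘ g) (ep t).2 true
                  ∈ Finset.univ.filter (fun b => RelLab s0 ep false X b) := by
                simp only [Finset.mem_filter, Finset.mem_univ, true_and] at hb1 ⊢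
                exact hmm.mp hb1
              exact ⟨1, by rw [if_pos hb1, if_pos hb2]; ring⟩
            · have hb2 : Function.update (y2 ∘ g) (ep t).2 true
                  ∉ Finset.univ.filter (fun b => RelLab s0 ep false X b) := by
                simp only [Finset.mem_filter, Finset.mem_univ, true_and] at hb1 ⊢
                exact fun h => hb1 (hmm.mpr h)
              exact ⟨0, by rw [if_neg hb1, if_neg hb2]; ring⟩
        obtain ⟨r0, hr0⟩ := main
        refine ⟨(-1 : R) ^ (Finset.univ.filter fun r =>
            r < t ∧ Function.update s0 t true r = true).card * r0, ?_⟩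
        rw [← Finset.mul_sum, hr0]; ring
      · refine ⟨0, ?_⟩
        rw [mul_zero]
        apply Finset.sum_eq_zero
        intro b _
        have hnot : (⟨s0, b⟩ : D.Enh)
            ∉ Set.range (fun b' => (⟨Function.update y1 t false, b'⟩ : D.Enh)) := by
          rintro ⟨x, hx⟩
          exact h2 (congrArg Sigma.fst hx)
        rw [dif_pos h1, Finsupp.smul_apply, Finsupp.mapDomain_notin_range _ _ hnot,
          smul_zero]
    · exact ⟨0, by simp [dif_neg h1]⟩
  choose r hr using hper
  refine ⟨∑ t, r t, ?_⟩
  simp only [Diagram.dE, Finsupp.finset_sum_apply]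
  rw [Finset.sum_comm]
  rw [Finset.sum_congr rfl fun t _ => hr t, ← Finset.mul_sum]
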